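/- Let n ≥ 2 and p > 0. The restriction of π_n to 𝔹_{p,n} is a proper holomorphic mapping from 𝔹_{p,n} onto 𝔼_{p,n}, and π_n maps the boundary ∂𝔹_{p,n} onto the boundary ∂𝔼_{p,n}. -/

import Mathlib

open Finset

/-- The symmetrization map `π_n : ℂⁿ → ℂⁿ`, whose `k`-th component is the
`(k+1)`-st elementary symmetric polynomial of the coordinates. -/
noncomputable def piMap (n : ℕ) (z : Fin n → ℂ) : Fin n → ℂ :=
  fun k => ∑ s ∈ Finset.powersetCard (k.1 + 1) Finset.univ, ∏ j ∈ s, z j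

/-- The generalized complex ellipsoid `𝔹_{p,n} = {z : ∑ |z_j|^(2p) < 1}`. -/
noncomputable def ellipsoid (p : ℝ) (n : ℕ) : Set (Fin n → ℂ) :=
  {z | ∑ j, ‖z j‖ ^ (2 * p) < 1}

/-- The symmetrized `(p,n)`-ellipsoid `𝔼_{p,n} = π_n(𝔹_{p,n})`. -/
noncomputable def symEllipsoid (p : ℝ) (n : ℕ) : Set (Fin n → ℂ) :=
  piMap n '' ellipsoid p n

/-- The Euclidean unit ball in `ℂⁿ`. -/
def unitBall (n : ℕ) : Set (Fin n → ℂ) :=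
  {z | ∑ j, ‖z j‖ ^ 2 < 1}

/-- `f` is a proper holomorphic map from the domain `D` onto (into) the domain `G`:
it is holomorphic on `D`, maps `D` into `G`, and preimages of compact subsets of `G`
are compact. -/
def IsProperHolomorphic {n : ℕ} (f : (Fin n → ℂ) → (Fin n → ℂ))
    (D G : Set (Fin n → ℂ)) : Prop :=
  DifferentiableOn ℂ f D ∧ Set.MapsTo f D G ∧
    ∀ K : Set (Fin n → ℂ), K ⊆ G → IsCompact K → IsCompact (D ∩ f ⁻¹' K)

/-- `φ` is an automorphism of the domain `D`: a holomorphic bijection of `D` onto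
itself with holomorphic inverse. -/
def IsAutomorphismOf {n : ℕ} (φ : (Fin n → ℂ) → (Fin n → ℂ))
    (D : Set (Fin n → ℂ)) : Prop :=
  DifferentiableOn ℂ φ D ∧ Set.BijOn φ D D ∧
    ∃ ψ : (Fin n → ℂ) → (Fin n → ℂ), DifferentiableOn ℂ ψ D ∧ Set.InvOn ψ φ D D

/-- `f : ℂⁿ → ℂⁿ` is a polynomial mapping. -/
def IsPolynomialMap {n : ℕ} (f : (Fin n → ℂ) → (Fin n → ℂ)) : Prop :=
  ∃ P : Fin n → MvPolynomial (Fin n) ℂ, ∀ z k, f z k = MvPolynomial.eval z (P k)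

namespace PM

open Polynomial

variable {n : ℕ} {p : ℝ}

/-! ### The multiset of coordinates and elementary symmetric functions -/

/-- The multiset of coordinates of a point of `ℂⁿ`. -/
noncomputable def msetOf (z : Fin n → ℂ) : Multiset ℂ := Finset.univ.val.map z

lemma card_msetOf (z : Fin n → ℂ) : Multiset.card (msetOf z) = n := by
  simp [msetOf]

lemma piMap_eq_esymm (z : Fin n → ℂ) (k : Fin n) :
    piMap n z k = (msetOf z).esymm (k.1 + 1) := by
  rw [msetOf, Finset.esymm_map_val]; rfl

lemma esymm_zero' (s : Multiset ℂ) : s.esymm 0 = 1 := by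
  simp [Multiset.esymm]

/-- Points with the same image under `piMap` have the same multiset of coordinates. -/
lemma msetOf_eq_of_piMap_eq {z w : Fin n → ℂ} (h : piMap n z = piMap n w) :
    msetOf z = msetOf w := by
  have hprod : ((msetOf z).map fun a => X - C a).prod
      = ((msetOf w).map fun a => X - C a).prod := by
    ext k
    by_cases hk : k ≤ n
    · rw [Multiset.prod_X_sub_C_coeff _ (by rw [card_msetOf]; exact hk),
        Multiset.prod_X_sub_C_coeff _ (by rw [card_msetOf (z := w)]; exact hk),
        card_msetOf, card_msetOf]
      rcases Nat.eq_or_lt_of_le hk with h1 | h1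
      · rw [h1, Nat.sub_self, esymm_zero', esymm_zero']
      · have hm : n - k - 1 < n := by omega
        have he : n - k = (n - k - 1) + 1 := by omega
        rw [he, ← piMap_eq_esymm z ⟨n - k - 1, hm⟩, ← piMap_eq_esymm w ⟨n - k - 1, hm⟩, h]
    · rw [Polynomial.coeff_eq_zero_of_natDegree_lt, Polynomial.coeff_eq_zero_of_natDegree_lt] <;>
        · rw [Polynomial.natDegree_multiset_prod_X_sub_C_eq_card, card_msetOf]; omega
  calc msetOf z = ((msetOf z).map fun a => X - C a).prod.roots :=
        (Polynomial.roots_multiset_prod_X_sub_C _).symm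
    _ = ((msetOf w).map fun a => X - C a).prod.roots := by rw [hprod]
    _ = msetOf w := Polynomial.roots_multiset_prod_X_sub_C _

lemma sum_eq_of_msetOf_eq {z w : Fin n → ℂ} (h : msetOf z = msetOf w) (p : ℝ) :
    ∑ j, ‖z j‖ ^ (2 * p) = ∑ j, ‖w j‖ ^ (2 * p) := by
  have := congrArg (fun s : Multiset ℂ => (s.map fun a : ℂ => ‖a‖ ^ (2 * p)).sum) h
  simpa [msetOf, Multiset.map_map, Finset.sum, Function.comp_def] using this

/-! ### Topology of the ellipsoid -/

lemma continuous_nsum (p : ℝ) (hp : 0 < p) :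
    Continuous fun z : Fin n → ℂ => ∑ j, ‖z j‖ ^ (2 * p) := by
  refine continuous_finset_sum _ fun j _ => ?_
  exact ((continuous_apply j).norm).rpow_const fun x => Or.inr (by positivity)

lemma isOpen_ellipsoid (hp : 0 < p) : IsOpen (ellipsoid p n) :=
  isOpen_lt (continuous_nsum p hp) continuous_const

lemma smul_mem_ellipsoid (hp : 0 < p) {z : Fin n → ℂ}
    (hz : ∑ j, ‖z j‖ ^ (2 * p) ≤ 1) {t : ℝ} (h0 : 0 ≤ t) (h1 : t < 1) :
    t • z ∈ ellipsoid p n := by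
  have hcalc : ∑ j, ‖(t • z) j‖ ^ (2 * p) = t ^ (2 * p) * ∑ j, ‖z j‖ ^ (2 * p) := by
    rw [Finset.mul_sum]
    refine Finset.sum_congr rfl fun j _ => ?_
    rw [Pi.smul_apply, norm_smul, Real.norm_eq_abs, abs_of_nonneg h0,
      Real.mul_rpow h0 (norm_nonneg _)]
  have ht : t ^ (2 * p) < 1 := Real.rpow_lt_one h0 h1 (by positivity)
  have : ∑ j, ‖(t • z) j‖ ^ (2 * p) ≤ t ^ (2 * p) := by
    rw [hcalc]
    calc t ^ (2 * p) * ∑ j, ‖z j‖ ^ (2 * p) ≤ t ^ (2 * p) * 1 :=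
      mul_le_mul_of_nonneg_left hz (Real.rpow_nonneg h0 _)
    _ = t ^ (2 * p) := mul_one _
  exact lt_of_le_of_lt this ht

lemma tendsto_smul_seq (z : Fin n → ℂ) :
    Filter.Tendsto (fun m : ℕ => (1 - ((m : ℝ) + 1)⁻¹) • z) Filter.atTop (nhds z) := by
  have h1 : Filter.Tendsto (fun m : ℕ => (1 - ((m : ℝ) + 1)⁻¹)) Filter.atTop (nhds 1) := by
    have := tendsto_one_div_add_atTop_nhds_zero_nat (𝕜 := ℝ)
    simpa [one_div] using (tendsto_const_nhds (x := (1:ℝ))).sub this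
  simpa using h1.smul_const z

lemma smul_coeff_nonneg (m : ℕ) : 0 ≤ 1 - ((m : ℝ) + 1)⁻¹ := by
  have : ((m : ℝ) + 1)⁻¹ ≤ 1 := by
    rw [inv_le_one_iff₀]; right; linarith [Nat.cast_nonneg (α := ℝ) m]
  linarith

lemma smul_coeff_lt_one (m : ℕ) : 1 - ((m : ℝ) + 1)⁻¹ < 1 := by
  have : 0 < ((m : ℝ) + 1)⁻¹ := by positivity
  linarith

lemma closure_ellipsoid (hp : 0 < p) :
    closure (ellipsoid p n) = {z | ∑ j, ‖z j‖ ^ (2 * p) ≤ 1} := by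
  apply Set.Subset.antisymm
  · exact closure_minimal (fun z hz => le_of_lt (show _ < (1:ℝ) from hz))
      (isClosed_le (continuous_nsum p hp) continuous_const)
  · intro z hz
    refine mem_closure_of_tendsto (tendsto_smul_seq z)
      (Filter.Eventually.of_forall fun m => ?_)
    exact smul_mem_ellipsoid hp hz (smul_coeff_nonneg m) (smul_coeff_lt_one m)

lemma frontier_ellipsoid (hp : 0 < p) :
    frontier (ellipsoid p n) = {z | ∑ j, ‖z j‖ ^ (2 * p) = 1} := by
  rw [frontier, closure_ellipsoid hp, (isOpen_ellipsoid hp).interior_eq]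
  ext z
  simp only [Set.mem_diff, Set.mem_setOf_eq, ellipsoid, not_lt]
  constructor
  · rintro ⟨h1, h2⟩; linarith
  · rintro h; exact ⟨le_of_eq h, le_of_eq h.symm⟩

lemma closure_ellipsoid_subset_ball (hp : 0 < p) :
    closure (ellipsoid p n) ⊆ Metric.closedBall 0 1 := by
  rw [closure_ellipsoid hp]
  intro z hz
  simp only [Metric.mem_closedBall, dist_zero_right]
  rw [pi_norm_le_iff_of_nonneg zero_le_one]
  intro j
  by_contra hj
  push_neg at hj
  have h1 : (1 : ℝ) < ‖z j‖ ^ (2 * p) := by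
    have := Real.rpow_lt_rpow zero_le_one hj (by positivity : (0:ℝ) < 2 * p)
    simpa using this
  have h2 : ‖z j‖ ^ (2 * p) ≤ ∑ i, ‖z i‖ ^ (2 * p) :=
    Finset.single_le_sum (fun i _ => Real.rpow_nonneg (norm_nonneg _) _) (Finset.mem_univ j)
  exact absurd (Set.mem_setOf_eq ▸ hz) (by push_neg; linarith)

lemma isCompact_closure_ellipsoid (hp : 0 < p) :
    IsCompact (closure (ellipsoid p n)) :=
  (isCompact_closedBall (0 : Fin n → ℂ) 1).of_isClosed_subset isClosed_closure
    (closure_ellipsoid_subset_ball hp)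

/-! ### Differentiability of `piMap` -/

lemma differentiable_prod (s : Finset (Fin n)) :
    Differentiable ℂ fun z : Fin n → ℂ => ∏ j ∈ s, z j := by
  classical
  induction s using Finset.induction with
  | empty => simpa using differentiable_const (1 : ℂ)
  | @insert a s ha ih =>
    have : (fun z : Fin n → ℂ => ∏ j ∈ insert a s, z j)
        = fun z => z a * ∏ j ∈ s, z j := by
      funext z; rw [Finset.prod_insert ha]
    rw [this]
    exact (differentiable_pi.mp differentiable_id a).mul ih

lemma differentiable_piMap : Differentiable ℂ (piMap n) := by
  rw [differentiable_pi]
  intro k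
  exact Differentiable.fun_sum fun s _ => differentiable_prod s

lemma continuous_piMap : Continuous (piMap n) :=
  differentiable_piMap.continuous

/-- If some point of the ellipsoid has the same image, so does the given point. -/
lemma mem_ellipsoid_of_piMap_eq (hp : 0 < p) {z w : Fin n → ℂ}
    (hw : w ∈ ellipsoid p n) (h : piMap n z = piMap n w) : z ∈ ellipsoid p n := by
  have hs := sum_eq_of_msetOf_eq (msetOf_eq_of_piMap_eq h) p
  show ∑ j, ‖z j‖ ^ (2 * p) < 1
  rw [hs]
  exact hw

/-! ### The monic polynomial attached to a point of the target -/

/-- The monic polynomial whose coefficients are read off from `y`. -/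
noncomputable def qpoly (n : ℕ) (y : Fin n → ℂ) : Polynomial ℂ :=
  X ^ n + ∑ i : Fin n, C ((-1) ^ (i.1 + 1) * y i) * X ^ (n - 1 - i.1)

lemma degree_qsum_lt (y : Fin n → ℂ) (hn : 1 ≤ n) :
    (∑ i : Fin n, C ((-1) ^ (i.1 + 1) * y i) * X ^ (n - 1 - i.1)).degree
      < ((n : ℕ) : WithBot ℕ) := by
  refine lt_of_le_of_lt (Polynomial.degree_sum_le _ _) ?_
  rw [Finset.sup_lt_iff (by exact_mod_cast WithBot.bot_lt_coe (n : ℕ))]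
  intro i _
  refine lt_of_le_of_lt (Polynomial.degree_C_mul_X_pow_le _ _) ?_
  have h : n - 1 - i.1 < n := by omega
  exact_mod_cast WithBot.coe_lt_coe.mpr h

lemma monic_qpoly (y : Fin n → ℂ) (hn : 1 ≤ n) : (qpoly n y).Monic :=
  Polynomial.monic_X_pow_add (degree_qsum_lt y hn)

lemma degree_qpoly (y : Fin n → ℂ) (hn : 1 ≤ n) : (qpoly n y).degree = n := by
  rw [qpoly, Polynomial.degree_add_eq_left_of_degree_lt, Polynomial.degree_X_pow]
  rw [Polynomial.degree_X_pow]; exact degree_qsum_lt y hn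

lemma natDegree_qpoly (y : Fin n → ℂ) (hn : 1 ≤ n) : (qpoly n y).natDegree = n :=
  Polynomial.natDegree_eq_of_degree_eq_some (degree_qpoly y hn)

lemma qpoly_coeff_lt (y : Fin n → ℂ) {k : ℕ} (hk : k < n) :
    (qpoly n y).coeff k = (-1) ^ (n - k) * y ⟨n - k - 1, by omega⟩ := by
  rw [qpoly, Polynomial.coeff_add, Polynomial.coeff_X_pow, if_neg (by omega),
    Polynomial.finset_sum_coeff]
  rw [Finset.sum_eq_single (⟨n - k - 1, by omega⟩ : Fin n)]
  · rw [Polynomial.coeff_C_mul, Polynomial.coeff_X_pow, if_pos (by simp; omega)]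
    have : n - 1 - (n - k - 1) = k := by omega
    have h2 : (n - k - 1) + 1 = n - k := by omega
    simp [h2]
  · intro i _ hi
    rw [Polynomial.coeff_C_mul, Polynomial.coeff_X_pow, if_neg, mul_zero]
    intro hcon
    apply hi
    have : i.1 = n - k - 1 := by omega
    exact Fin.ext this
  · simp

/-- The product of `X - z j` equals `qpoly` of `piMap z`. -/
lemma prod_msetOf_eq_qpoly (z : Fin n → ℂ) (hn : 1 ≤ n) :
    ((msetOf z).map fun a => X - C a).prod = qpoly n (piMap n z) := by
  have hdeg : (((msetOf z).map fun a => X - C a).prod).natDegree = n := by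
    rw [Polynomial.natDegree_multiset_prod_X_sub_C_eq_card, card_msetOf]
  ext k
  by_cases hk : k ≤ n
  · rw [Multiset.prod_X_sub_C_coeff _ (by rw [card_msetOf]; exact hk), card_msetOf]
    rcases Nat.eq_or_lt_of_le hk with h1 | h1
    · have hq := (monic_qpoly (piMap n z) hn).coeff_natDegree
      rw [natDegree_qpoly _ hn] at hq
      rw [h1, Nat.sub_self, hq]
      simp [Multiset.esymm]
    · rw [qpoly_coeff_lt _ h1]
      have hm : n - k - 1 < n := by omega
      have he : (msetOf z).esymm (n - k) = piMap n z ⟨n - k - 1, hm⟩ := by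
        have hv : (⟨n - k - 1, hm⟩ : Fin n).1 = n - k - 1 := rfl
        rw [piMap_eq_esymm, hv]
        congr 1
        omega
      rw [he]
  · rw [Polynomial.coeff_eq_zero_of_natDegree_lt (by rw [hdeg]; omega),
      Polynomial.coeff_eq_zero_of_natDegree_lt (by rw [natDegree_qpoly _ hn]; omega)]

lemma card_roots_qpoly (y : Fin n → ℂ) (hn : 1 ≤ n) :
    Multiset.card (qpoly n y).roots = n := by
  have hsp : (qpoly n y).Splits := IsAlgClosed.splits _
  rw [Polynomial.splits_iff_card_roots.mp hsp, natDegree_qpoly _ hn]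

/-- An enumeration of the roots of `qpoly n y` is a preimage of `y` under `piMap`. -/
lemma exists_piMap_eq (y : Fin n → ℂ) (hn : 1 ≤ n) :
    ∃ z : Fin n → ℂ, msetOf z = (qpoly n y).roots ∧ piMap n z = y := by
  obtain ⟨l, hl⟩ : ∃ l : List ℂ, (l : Multiset ℂ) = (qpoly n y).roots :=
    ⟨(qpoly n y).roots.toList, Multiset.coe_toList _⟩
  have hlen : l.length = n := by
    have := card_roots_qpoly y hn
    rw [← hl] at this
    simpa using this
  set z : Fin n → ℂ := fun i => l.get (Fin.cast hlen.symm i) with hz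
  have hms : msetOf z = (qpoly n y).roots := by
    rw [msetOf, ← hl]
    rw [Fin.univ_val_map]
    congr 1
    subst hlen
    simp [hz]
  refine ⟨z, hms, ?_⟩
  have hprod : ((msetOf z).map fun a => X - C a).prod = qpoly n y := by
    rw [hms]
    exact Polynomial.prod_multiset_X_sub_C_of_monic_of_roots_card_eq (monic_qpoly y hn)
      (by rw [card_roots_qpoly y hn, natDegree_qpoly y hn])
  have h2 := prod_msetOf_eq_qpoly z hn
  rw [hprod] at h2
  funext k
  have hc := congrArg (fun q : Polynomial ℂ => q.coeff (n - k.1 - 1)) h2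
  try simp only at hc
  have hk : n - k.1 - 1 < n := by omega
  rw [qpoly_coeff_lt y hk, qpoly_coeff_lt (piMap n z) hk] at hc
  have hnk : n - (n - k.1 - 1) - 1 = k.1 := by have := k.2; omega
  have hfin : (⟨n - (n - k.1 - 1) - 1, by omega⟩ : Fin n) = k := Fin.ext hnk
  rw [hfin] at hc
  exact (mul_left_cancel₀ (pow_ne_zero _ (by norm_num : (-1 : ℂ) ≠ 0)) hc).symm

/-- Roots of `qpoly n y` are bounded in terms of `y`. -/
lemma norm_root_qpoly_le {y : Fin n → ℂ} {a : ℂ} (hn : 1 ≤ n)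
    (ha : a ∈ (qpoly n y).roots) : ‖a‖ ≤ 1 + ∑ i, ‖y i‖ := by
  have hne : qpoly n y ≠ 0 := (monic_qpoly y hn).ne_zero
  have heval : (qpoly n y).eval a = 0 := (Polynomial.mem_roots hne).mp ha
  have hev : a ^ n + ∑ i : Fin n, ((-1) ^ (i.1 + 1) * y i) * a ^ (n - 1 - i.1) = 0 := by
    simpa [qpoly, Polynomial.eval_finset_sum] using heval
  by_contra hcon
  push_neg at hcon
  set S := ∑ i, ‖y i‖ with hS
  have hS0 : 0 ≤ S := Finset.sum_nonneg fun i _ => norm_nonneg _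
  have ha1 : 1 < ‖a‖ := by linarith
  have key : ‖a‖ ^ n ≤ S * ‖a‖ ^ (n - 1) := by
    have h1 : a ^ n = -∑ i : Fin n, ((-1) ^ (i.1 + 1) * y i) * a ^ (n - 1 - i.1) := by
      linear_combination hev
    calc ‖a‖ ^ n = ‖a ^ n‖ := (norm_pow a n).symm
      _ = ‖∑ i : Fin n, ((-1) ^ (i.1 + 1) * y i) * a ^ (n - 1 - i.1)‖ := by rw [h1, norm_neg]
      _ ≤ ∑ i : Fin n, ‖((-1) ^ (i.1 + 1) * y i) * a ^ (n - 1 - i.1)‖ := norm_sum_le _ _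
      _ ≤ ∑ i : Fin n, ‖y i‖ * ‖a‖ ^ (n - 1) := by
          refine Finset.sum_le_sum fun i _ => ?_
          rw [norm_mul, norm_mul, norm_pow, norm_pow]
          simp only [norm_neg, norm_one, one_pow, one_mul]
          have h3 : ‖a‖ ^ (n - 1 - i.1) ≤ ‖a‖ ^ (n - 1) :=
            pow_le_pow_right₀ (le_of_lt ha1) (by omega)
          exact mul_le_mul_of_nonneg_left h3 (norm_nonneg (y i))
      _ = S * ‖a‖ ^ (n - 1) := by rw [← Finset.sum_mul]
  have hlt : S * ‖a‖ ^ (n - 1) < ‖a‖ ^ n := by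
    have hpp : 0 < ‖a‖ ^ (n - 1) := pow_pos (lt_trans one_pos ha1) _
    calc S * ‖a‖ ^ (n - 1) < ‖a‖ * ‖a‖ ^ (n - 1) :=
        mul_lt_mul_of_pos_right (by linarith) hpp
      _ = ‖a‖ ^ n := by rw [← pow_succ']; congr 1; omega
  linarith

/-! ### Openness of the symmetrized ellipsoid -/

lemma isOpen_symEllipsoid (hn : 1 ≤ n) (hp : 0 < p) : IsOpen (symEllipsoid p n) := by
  rw [isOpen_iff_mem_nhds]
  rintro y0 ⟨z₀, hz₀, rfl⟩
  by_contra hnb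
  have hcl : piMap n z₀ ∈ closure (symEllipsoid p n)ᶜ := by
    rw [closure_compl]
    exact fun h => hnb (mem_interior_iff_mem_nhds.mp h)
  obtain ⟨y, hyE, hy⟩ := mem_closure_iff_seq_limit.mp hcl
  choose z hzr hzp using fun m => exists_piMap_eq (y m) hn
  obtain ⟨Cb, hCb⟩ := (hy.norm).bddAbove_range
  have hCb' : ∀ m, ‖y m‖ ≤ Cb := fun m => hCb (Set.mem_range_self m)
  have hCb0 : 0 ≤ Cb := le_trans (norm_nonneg _) (hCb' 0)
  set R : ℝ := 1 + n * Cb with hR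
  have hR0 : 0 ≤ R := by positivity
  have hball : ∀ m, z m ∈ Metric.closedBall (0 : Fin n → ℂ) R := by
    intro m
    simp only [Metric.mem_closedBall, dist_zero_right]
    rw [pi_norm_le_iff_of_nonneg hR0]
    intro j
    have hmem : z m j ∈ (qpoly n (y m)).roots := by
      rw [← hzr m]
      exact Multiset.mem_map.mpr ⟨j, Finset.mem_univ_val j, rfl⟩
    refine le_trans (norm_root_qpoly_le hn hmem) ?_
    have : ∑ i, ‖y m i‖ ≤ (n : ℝ) * Cb := by
      calc ∑ i, ‖y m i‖ ≤ ∑ _i : Fin n, Cb :=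
            Finset.sum_le_sum fun i _ => le_trans (norm_le_pi_norm (y m) i) (hCb' m)
        _ = (n : ℝ) * Cb := by rw [Finset.sum_const, Finset.card_univ, Fintype.card_fin,
              nsmul_eq_mul]
    linarith
  obtain ⟨a, -, φ, hφ, hconv⟩ :=
    (isCompact_closedBall (0 : Fin n → ℂ) R).tendsto_subseq hball
  have h1 : Filter.Tendsto (fun m => piMap n (z (φ m))) Filter.atTop (nhds (piMap n a)) :=
    (continuous_piMap.tendsto a).comp hconv
  have h1' : Filter.Tendsto (fun m => y (φ m)) Filter.atTop (nhds (piMap n a)) := by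
    refine h1.congr fun m => hzp (φ m)
  have h2 : Filter.Tendsto (fun m => y (φ m)) Filter.atTop (nhds (piMap n z₀)) :=
    hy.comp hφ.tendsto_atTop
  have hpa : piMap n a = piMap n z₀ := tendsto_nhds_unique h1' h2
  have haD : a ∈ ellipsoid p n := mem_ellipsoid_of_piMap_eq hp hz₀ hpa
  have h3 : Filter.Tendsto (fun m => ∑ j, ‖z (φ m) j‖ ^ (2 * p)) Filter.atTop
      (nhds (∑ j, ‖a j‖ ^ (2 * p))) :=
    ((continuous_nsum p hp).tendsto a).comp hconv
  have hev : ∀ᶠ m in Filter.atTop, ∑ j, ‖z (φ m) j‖ ^ (2 * p) < 1 :=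
    h3.eventually_lt_const haD
  obtain ⟨m, hm⟩ := hev.exists
  exact hyE (φ m) ⟨z (φ m), hm, hzp (φ m)⟩

/-! ### Properness -/

lemma proper_piMap (hp : 0 < p) (K : Set (Fin n → ℂ)) (hK : K ⊆ symEllipsoid p n)
    (hKc : IsCompact K) : IsCompact (ellipsoid p n ∩ piMap n ⁻¹' K) := by
  have hsub : closure (ellipsoid p n ∩ piMap n ⁻¹' K) ⊆ ellipsoid p n ∩ piMap n ⁻¹' K := by
    intro x hx
    have hx2 : x ∈ piMap n ⁻¹' K := by
      have hcl : IsClosed (piMap n ⁻¹' K) := hKc.isClosed.preimage continuous_piMap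
      exact hcl.closure_subset (closure_mono Set.inter_subset_right hx)
    obtain ⟨w, hw, hpw⟩ := hK hx2
    exact ⟨mem_ellipsoid_of_piMap_eq hp hw hpw.symm, hx2⟩
  refine (isCompact_closure_ellipsoid hp).of_isClosed_subset
    (isClosed_of_closure_subset hsub)
    (Set.Subset.trans Set.inter_subset_left subset_closure)

/-! ### Boundary behaviour -/

lemma image_frontier (hn : 1 ≤ n) (hp : 0 < p) :
    piMap n '' frontier (ellipsoid p n) = frontier (symEllipsoid p n) := by
  have hEopen := isOpen_symEllipsoid hn hp
  apply Set.Subset.antisymm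
  · rintro _ ⟨z, hz, rfl⟩
    rw [frontier_ellipsoid hp] at hz
    have hz1 : ∑ j, ‖z j‖ ^ (2 * p) = 1 := hz
    constructor
    · -- in the closure
      refine mem_closure_of_tendsto
        ((continuous_piMap.tendsto z).comp (tendsto_smul_seq z))
        (Filter.Eventually.of_forall fun m => ?_)
      exact ⟨_, smul_mem_ellipsoid hp (le_of_eq hz1) (smul_coeff_nonneg m)
        (smul_coeff_lt_one m), rfl⟩
    · -- not in the interior
      rw [hEopen.interior_eq]
      rintro ⟨w, hw, hpw⟩
      have hs := sum_eq_of_msetOf_eq (msetOf_eq_of_piMap_eq hpw) p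
      have hw1 : ∑ j, ‖w j‖ ^ (2 * p) < 1 := hw
      rw [hs, hz1] at hw1
      exact lt_irrefl _ hw1
  · intro y hy
    obtain ⟨hy1, hy2⟩ := hy
    have hC : closure (symEllipsoid p n) ⊆ piMap n '' closure (ellipsoid p n) := by
      refine closure_minimal ?_
        (((isCompact_closure_ellipsoid hp).image continuous_piMap).isClosed)
      rintro _ ⟨z, hz, rfl⟩
      exact ⟨z, subset_closure hz, rfl⟩
    obtain ⟨z, hz, rfl⟩ := hC hy1
    rw [closure_ellipsoid hp] at hz
    have hz' : ∑ j, ‖z j‖ ^ (2 * p) ≤ 1 := hz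
    rcases lt_or_eq_of_le hz' with h | h
    · refine absurd ?_ hy2
      rw [hEopen.interior_eq]
      exact ⟨z, h, rfl⟩
    · exact ⟨z, (frontier_ellipsoid hp).symm ▸ h, rfl⟩

end PM

/-- `π_n` restricted to `𝔹_{p,n}` is a proper holomorphic mapping onto
`𝔼_{p,n}`, and it maps the boundary onto the boundary. -/
theorem piMap_proper (n : ℕ) (hn : 2 ≤ n) (p : ℝ) (hp : 0 < p) :
    IsProperHolomorphic (piMap n) (ellipsoid p n) (symEllipsoid p n) ∧
      piMap n '' ellipsoid p n = symEllipsoid p n ∧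
      piMap n '' frontier (ellipsoid p n) = frontier (symEllipsoid p n) := by
  have hn1 : 1 ≤ n := by omega
  refine ⟨⟨PM.differentiable_piMap.differentiableOn, fun z hz => ⟨z, hz, rfl⟩,
    fun K hK hKc => PM.proper_piMap hp K hK hKc⟩, rfl, PM.image_frontier hn1 hp⟩
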